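/- Every ε-uniform (δ,s,K)-Katz-Tao set S of δ-intervals (with uniformity parameter T and δ = 2^{-mT}) can be partitioned into at most 2^m · K sets S_i, each of which is a (δ, s, 2^{2T})-Katz-Tao set. -/

import Mathlib

open Set

noncomputable def intCount (S : Set ℝ) (ρ : ℝ) (n : ℤ) : ℕ :=
  (S ∩ Set.Ico ((n : ℝ) * ρ) (((n : ℝ) + 1) * ρ)).ncard

def KatzTao (δ s K : ℝ) (A : Set ℝ) : Prop :=
  ∀ (x r : ℝ), δ ≤ r → r ≤ 1 → ((A ∩ Metric.closedBall x r).ncard : ℝ) ≤ K * (r / δ) ^ s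

/-- an ε-uniform `(δ,s,K)`-Katz-Tao set of δ-intervals can be partitioned into
at most `2^m · K` sets, each a `(δ,s,2^{2T})`-Katz-Tao set. -/
theorem stmt2 (T m : ℕ) (hT : 0 < T) (δ s K : ℝ) (hδ : δ = (2 : ℝ) ^ (-(m * T : ℤ)))
    (hs : 0 < s) (hK : 1 ≤ K)
    (S : Set ℝ) (hfin : S.Finite) (hsub : S ⊆ Set.Icc 0 1)
    (hKT : KatzTao δ s K S)
    (hunif : ∀ j : ℕ, j ≤ m → ∀ n₁ n₂ : ℤ,
      intCount S ((2 : ℝ) ^ (-(j * T : ℤ))) n₁ ≠ 0 →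
      intCount S ((2 : ℝ) ^ (-(j * T : ℤ))) n₂ ≠ 0 →
      intCount S ((2 : ℝ) ^ (-(j * T : ℤ))) n₁ = intCount S ((2 : ℝ) ^ (-(j * T : ℤ))) n₂) :
    ∃ (N : ℕ) (F : ℕ → Set ℝ), (N : ℝ) ≤ 2 ^ m * K ∧
      (∀ i < N, F i ⊆ S) ∧ (⋃ i ∈ Finset.range N, F i) = S ∧
      (∀ i j, i < j → j < N → Disjoint (F i) (F j)) ∧
      ∀ i < N, KatzTao δ s (2 ^ (2 * T)) (F i) := by
  classical
  have hK0 : (0:ℝ) < K := by linarith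
  set N : ℕ := ⌈K / 3⌉₊ with hNdef
  have hN0 : 0 < N := Nat.ceil_pos.mpr (by linarith)
  have hNK : (N : ℝ) ≤ K := by
    rcases le_or_gt K 3 with h3 | h3
    · have : (N : ℝ) ≤ 1 := by
        have : K / 3 ≤ 1 := by linarith
        exact_mod_cast Nat.ceil_le.mpr (by linarith : K/3 ≤ ((1:ℕ):ℝ))
      linarith
    · have h1 : (N : ℝ) < K / 3 + 1 := Nat.ceil_lt_add_one (by positivity)
      linarith
  have hKN : K / 3 ≤ (N : ℝ) := Nat.le_ceil _
  clear_value N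
  -- the rank function
  set rank : ℝ → ℕ := fun x => (S ∩ Set.Iio x).ncard with hrankdef
  have hrank_mono : ∀ p ∈ S, ∀ q, p < q → rank p < rank q := by
    intro p hp q hpq
    apply Set.ncard_lt_ncard
    · constructor
      · rintro y ⟨hy1, hy2⟩
        exact ⟨hy1, lt_trans hy2 hpq⟩
      · intro hsub'
        have : p ∈ S ∩ Set.Iio p := hsub' ⟨hp, hpq⟩
        exact absurd this.2 (lt_irrefl p)
    · exact hfin.subset Set.inter_subset_left
  have hrank_le : ∀ p q : ℝ, p ≤ q → rank p ≤ rank q := by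
    intro p q hpq
    apply Set.ncard_le_ncard
    · rintro y ⟨hy1, hy2⟩; exact ⟨hy1, lt_of_lt_of_le hy2 hpq⟩
    · exact hfin.subset Set.inter_subset_left
  have hrank_inj : ∀ p ∈ S, ∀ q ∈ S, rank p = rank q → p = q := by
    intro p hp q hq h
    rcases lt_trichotomy p q with h' | h' | h'
    · exact absurd h (ne_of_lt (hrank_mono p hp q h'))
    · exact h'
    · exact absurd h.symm (ne_of_lt (hrank_mono q hq p h'))
  set F : ℕ → Set ℝ := fun i => {x | x ∈ S ∧ rank x % N = i} with hFdef
  refine ⟨N, F, ?_, ?_, ?_, ?_, ?_⟩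
  · -- N ≤ 2^m K
    calc (N : ℝ) ≤ K := hNK
    _ = 1 * K := (one_mul K).symm
    _ ≤ 2 ^ m * K := by
        have h2m : (1:ℝ) ≤ 2 ^ m := one_le_pow₀ one_le_two
        nlinarith
  · intro i _ x hx; exact hx.1
  · ext x
    simp only [Set.mem_iUnion, Finset.mem_range, hFdef, Set.mem_setOf_eq]
    constructor
    · rintro ⟨i, _, hx, _⟩; exact hx
    · intro hx; exact ⟨rank x % N, Nat.mod_lt _ hN0, hx, rfl⟩
  · intro i j hij hjN
    rw [Set.disjoint_left]
    rintro x ⟨_, hxi⟩ ⟨_, hxj⟩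
    omega
  · -- the main Katz-Tao bound for each piece
    intro i _ x r hδr hr1
    have hδ0 : (0:ℝ) < δ := by rw [hδ]; positivity
    have hrδ1 : (1:ℝ) ≤ r / δ := (one_le_div hδ0).mpr hδr
    have hrs1 : (1:ℝ) ≤ (r / δ) ^ s := Real.one_le_rpow hrδ1 (le_of_lt hs)
    have h4 : (4:ℝ) ≤ 2 ^ (2*T) := by
      calc (4:ℝ) = 2^2 := by norm_num
      _ ≤ 2^(2*T) := by apply pow_le_pow_right₀ one_le_two; omega
    set B : Set ℝ := Metric.closedBall x r with hBdef
    have hBIcc : B = Set.Icc (x - r) (x + r) := Real.closedBall_eq_Icc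
    set E : Set ℝ := S ∩ B with hEdef
    have hEfin : E.Finite := hfin.subset Set.inter_subset_left
    set L : ℕ := E.ncard with hLdef
    have hLK : (L : ℝ) ≤ K * (r / δ) ^ s := hKT x r hδr hr1
    set G : Set ℝ := F i ∩ B with hGdef
    have hGE : G ⊆ E := fun y hy => ⟨hy.1.1, hy.2⟩
    have hGfin : G.Finite := hEfin.subset hGE
    rcases Set.eq_empty_or_nonempty G with hGe | hGne
    · rw [hGe]
      simp only [Set.ncard_empty, Nat.cast_zero]
      positivity
    -- window lemma: ranks of points of E are within L-1 of each other
    have hwindow : ∀ p ∈ E, ∀ q ∈ E, rank p ≤ rank q + (L - 1) := by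
      intro p hp q hq
      have hL1 : 1 ≤ L := (Set.ncard_pos hEfin).mpr ⟨p, hp⟩
      rcases le_total p q with h | h
      · have := hrank_le p q h; omega
      · have hsub' : S ∩ Set.Iio p ⊆ (S ∩ Set.Iio q) ∪ (E \ {p}) := by
          rintro y ⟨hy1, hy2⟩
          rcases lt_or_ge y q with h' | h'
          · exact Or.inl ⟨hy1, h'⟩
          · refine Or.inr ⟨⟨hy1, ?_⟩, ?_⟩
            · rw [hBIcc]
              have hqB : q ∈ Set.Icc (x-r) (x+r) := by rw [← hBIcc]; exact hq.2
              have hpB : p ∈ Set.Icc (x-r) (x+r) := by rw [← hBIcc]; exact hp.2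
              exact ⟨le_trans hqB.1 h', le_trans (le_of_lt hy2) hpB.2⟩
            · exact fun hyp => absurd (hyp ▸ hy2) (lt_irrefl p)
        have h1 : rank p ≤ (S ∩ Set.Iio q).ncard + (E \ {p}).ncard := by
          calc rank p ≤ ((S ∩ Set.Iio q) ∪ (E \ {p})).ncard :=
                Set.ncard_le_ncard hsub' ((hfin.subset Set.inter_subset_left).union
                  (hEfin.subset Set.diff_subset))
          _ ≤ _ := Set.ncard_union_le _ _
        have h2 : (E \ {p}).ncard = L - 1 := Set.ncard_diff_singleton_of_mem hp
        have h3 : rank q = (S ∩ Set.Iio q).ncard := rfl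
        omega
    -- ranks of G as a finset
    set Gf : Finset ℝ := hGfin.toFinset with hGfdef
    have hGcard : G.ncard = Gf.card := Set.ncard_eq_toFinset_card G hGfin
    set Rs : Finset ℕ := Gf.image rank with hRsdef
    have hRcard : Rs.card = Gf.card := by
      apply Finset.card_image_of_injOn
      intro p hp q hq h
      exact hrank_inj p ((hGfin.mem_toFinset.mp hp).1.1) q ((hGfin.mem_toFinset.mp hq).1.1) h
    have hRne : Rs.Nonempty := by
      obtain ⟨p, hp⟩ := hGne
      exact ⟨rank p, Finset.mem_image_of_mem _ (hGfin.mem_toFinset.mpr hp)⟩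
    set A : ℕ := Rs.min' hRne with hAdef
    have hAmem : A ∈ Rs := Rs.min'_mem hRne
    obtain ⟨q₀, hq₀G, hq₀r⟩ := Finset.mem_image.mp hAmem
    have hq₀E : q₀ ∈ E := hGE (hGfin.mem_toFinset.mp hq₀G)
    have hbound : ∀ k ∈ Rs, A ≤ k ∧ k ≤ A + (L - 1) := by
      intro k hk
      obtain ⟨p, hpG, hpr⟩ := Finset.mem_image.mp hk
      have hpE : p ∈ E := hGE (hGfin.mem_toFinset.mp hpG)
      refine ⟨Rs.min'_le k hk, ?_⟩
      rw [← hpr, ← hq₀r]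
      exact hwindow p hpE q₀ hq₀E
    have hres : ∀ k ∈ Rs, k % N = i := by
      intro k hk
      obtain ⟨p, hpG, hpr⟩ := Finset.mem_image.mp hk
      rw [← hpr]
      exact ((hGfin.mem_toFinset.mp hpG)).1.2
    -- injection k ↦ (k - A)/N into range ((L-1)/N + 1)
    have hcardRs : Rs.card ≤ (L - 1) / N + 1 := by
      have hmaps : ∀ k ∈ Rs, (k - A) / N ∈ Finset.range ((L-1)/N + 1) := by
        intro k hk
        simp only [Finset.mem_range]
        have hb := hbound k hk
        have h1 : k - A ≤ L - 1 := by omega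
        have h2 := Nat.div_le_div_right (c := N) h1
        omega
      have := Finset.card_le_card_of_injOn (fun k => (k - A) / N)
        hmaps
        (by
          intro k hk k' hk' h
          simp only at h
          have hbk := hbound k hk
          have hbk' := hbound k' hk'
          have hrk := hres k hk
          have hrk' := hres k' hk'
          rcases le_total k k' with hle | hle
          · have hdvd : N ∣ k' - k := (Nat.modEq_iff_dvd' hle).mp (hrk.trans hrk'.symm)
            obtain ⟨t, ht⟩ := hdvd
            have hkA : k' - A = (k - A) + N * t := by omega
            rw [hkA, Nat.add_mul_div_left _ _ hN0] at h
            have ht0 : t = 0 := (Nat.left_eq_add).mp h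
            rw [ht0, Nat.mul_zero] at ht
            omega
          · have hdvd : N ∣ k - k' := (Nat.modEq_iff_dvd' hle).mp (hrk'.trans hrk.symm)
            obtain ⟨t, ht⟩ := hdvd
            have hkA : k - A = (k' - A) + N * t := by omega
            rw [hkA, Nat.add_mul_div_left _ _ hN0] at h
            have ht0 : t = 0 := (Nat.left_eq_add).mp h.symm
            rw [ht0, Nat.mul_zero] at ht
            omega)
      simpa using this
    have hc : G.ncard ≤ (L - 1) / N + 1 := by
      rw [hGcard, ← hRcard]; exact hcardRs
    -- now the real-number chain
    have hL1 : 1 ≤ L := (Set.ncard_pos hEfin).mpr ⟨q₀, hq₀E⟩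
    have hcast1 : ((((L - 1) / N : ℕ)) : ℝ) ≤ (L : ℝ) / N := by
      calc ((((L - 1) / N : ℕ)) : ℝ) ≤ ((L - 1 : ℕ) : ℝ) / (N : ℝ) := Nat.cast_div_le
      _ ≤ (L : ℝ) / N := by
          gcongr
          exact_mod_cast Nat.sub_le L 1
    have hmain : (G.ncard : ℝ) ≤ (L : ℝ) / N + 1 := by
      have : (G.ncard : ℝ) ≤ (((L - 1) / N + 1 : ℕ) : ℝ) := by exact_mod_cast hc
      push_cast at this
      linarith
    have hLN : (L : ℝ) / N ≤ 3 * (r / δ) ^ s := by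
      rw [div_le_iff₀ (by exact_mod_cast hN0)]
      calc (L : ℝ) ≤ K * (r / δ) ^ s := hLK
      _ = (K / 3) * 3 * (r / δ) ^ s := by ring
      _ ≤ (N : ℝ) * 3 * (r / δ) ^ s := by
          apply mul_le_mul_of_nonneg_right _ (by positivity)
          apply mul_le_mul_of_nonneg_right hKN (by norm_num)
      _ = 3 * (r / δ) ^ s * N := by ring
    calc ((F i ∩ B).ncard : ℝ) = (G.ncard : ℝ) := rfl
    _ ≤ (L : ℝ) / N + 1 := hmain
    _ ≤ 3 * (r / δ) ^ s + (r / δ) ^ s := by linarith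
    _ = 4 * (r / δ) ^ s := by ring
    _ ≤ 2 ^ (2*T) * (r / δ) ^ s := by
        apply mul_le_mul_of_nonneg_right h4 (by positivity)
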